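/- Let $x \in \mathbb{R}^n$ with $\|x\|_2 = 1$ and $g \in \mathbb{R}^n$. For $\tau \geq 0$ let $\beta = 1 + \frac{\tau^2}{4}(g^T g - (x^T g)^2)$ and $y(\tau) = \left(\frac{2 + \tau x^T g}{\beta} - 1\right)x - \frac{\tau}{\beta}g$. Then $\|y(\tau)\|_2 = 1$ for all $\tau \geq 0$. -/

import Mathlib

/-- The sphere (`p = 1`) case of the constraint-preserving update scheme: the curve
`y(τ)` stays on the unit sphere. -/
theorem stmt_18 (n : ℕ) (x g : EuclideanSpace ℝ (Fin n)) (hx : ‖x‖ = 1)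
    (β : ℝ → ℝ)
    (hβ : ∀ τ : ℝ, β τ = 1 + τ ^ 2 / 4 * ((inner ℝ g g : ℝ) - (inner ℝ x g : ℝ) ^ 2))
    (y : ℝ → EuclideanSpace ℝ (Fin n))
    (hy : ∀ τ : ℝ, y τ = ((2 + τ * (inner ℝ x g : ℝ)) / β τ - 1) • x - (τ / β τ) • g) :
    ∀ τ : ℝ, 0 ≤ τ → ‖y τ‖ = 1 := by
  intro τ _
  set a : ℝ := inner ℝ x g with ha
  set G : ℝ := inner ℝ g g with hG
  have hxx : (inner ℝ x x : ℝ) = 1 := by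
    rw [real_inner_self_eq_norm_sq, hx]; norm_num
  have hgx : (inner ℝ g x : ℝ) = a := by rw [ha, real_inner_comm]
  have hCS : a ^ 2 ≤ G := by
    have := abs_real_inner_le_norm x g
    have h2 : |a| ^ 2 ≤ (‖x‖ * ‖g‖) ^ 2 := by nlinarith [abs_nonneg a, norm_nonneg x, norm_nonneg g]
    rw [hx, sq_abs, one_mul] at h2
    rw [hG, real_inner_self_eq_norm_sq]
    exact h2
  have hβpos : 0 < β τ := by
    rw [hβ]; nlinarith [sq_nonneg τ]
  have hβne : β τ ≠ 0 := ne_of_gt hβpos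
  have key : (inner ℝ (y τ) (y τ) : ℝ) = 1 := by
    rw [hy]
    simp only [inner_sub_left, inner_sub_right, real_inner_smul_left, real_inner_smul_right,
      hxx, hgx, ← ha, ← hG]
    field_simp
    rw [hβ]
    ring
  have : ‖y τ‖ ^ 2 = 1 := by
    rw [← real_inner_self_eq_norm_sq, key]
  nlinarith [norm_nonneg (y τ)]
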